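/- For any ε ∈ (0,1), the unit ball of the ε-norm equals the Minkowski sum of the Euclidean ball of radius ε and the ℓ∞ ball of radius 1-ε: {ξ : ‖ξ‖_ε ≤ 1} = {x + y : ‖x‖₂ ≤ ε, ‖y‖_∞ ≤ 1-ε}. -/

import Mathlib

open Filter Topology

/-- The ε-norm of `ξ`: the unique `ν ≥ 0` with `∑ᵢ (|ξᵢ| - (1-ε)ν)₊² = (εν)²`
(with `‖0‖_ε = 0`). -/
noncomputable def epsNorm (n : ℕ) (ε : ℝ) (ξ : EuclideanSpace ℝ (Fin n)) : ℝ :=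
  sInf {ν : ℝ | 0 ≤ ν ∧ ∑ i, (max (|ξ i| - (1 - ε) * ν) 0) ^ 2 = (ε * ν) ^ 2}

section aux
variable {n : ℕ} {ε : ℝ} (ξ : EuclideanSpace ℝ (Fin n))

private def gg (ξ : EuclideanSpace ℝ (Fin n)) (ε : ℝ) (ν : ℝ) : ℝ :=
  ∑ i, (max (|ξ i| - (1 - ε) * ν) 0) ^ 2 - (ε * ν) ^ 2

private lemma gg_cont : Continuous (gg ξ ε) := by
  unfold gg
  exact (continuous_finset_sum _ fun i _ =>
    ((continuous_const.sub (continuous_const.mul continuous_id)).max continuous_const).pow 2).sub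
    ((continuous_const.mul continuous_id).pow 2)

private lemma gg_mono (hε : ε ∈ Set.Ioo (0:ℝ) 1) {ν μ : ℝ} (hν : 0 ≤ ν) (hνμ : ν ≤ μ)
    (h : gg ξ ε ν ≤ 0) : gg ξ ε μ ≤ 0 := by
  unfold gg at *
  have h1 : ∑ i, (max (|ξ i| - (1 - ε) * μ) 0) ^ 2 ≤ ∑ i, (max (|ξ i| - (1 - ε) * ν) 0) ^ 2 := by
    apply Finset.sum_le_sum
    intro i _
    apply pow_le_pow_left₀ (le_max_right _ 0)
    apply max_le_max_right
    have : (1 - ε) * ν ≤ (1 - ε) * μ :=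
      mul_le_mul_of_nonneg_left hνμ (by linarith [hε.2])
    linarith
  have h2 : (ε * ν) ^ 2 ≤ (ε * μ) ^ 2 := by
    apply pow_le_pow_left₀ (mul_nonneg hε.1.le hν)
    exact mul_le_mul_of_nonneg_left hνμ hε.1.le
  linarith

private lemma gg_zero : 0 ≤ gg ξ ε 0 := by
  unfold gg
  have h : (ε * 0) ^ 2 = 0 := by ring
  rw [h, sub_zero]
  exact Finset.sum_nonneg fun i _ => sq_nonneg _

private lemma the_set_nonempty (hε : ε ∈ Set.Ioo (0:ℝ) 1) :
    {ν : ℝ | 0 ≤ ν ∧ ∑ i, (max (|ξ i| - (1 - ε) * ν) 0) ^ 2 = (ε * ν) ^ 2}.Nonempty := by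
  set ν₀ : ℝ := (∑ i, |ξ i|) / (1 - ε) + 1 with hν₀
  have h1ε : (0:ℝ) < 1 - ε := by linarith [hε.2]
  have hsum : 0 ≤ ∑ i, |ξ i| := Finset.sum_nonneg fun i _ => abs_nonneg _
  have hν₀0 : 0 ≤ ν₀ := by positivity
  have hgν₀ : gg ξ ε ν₀ ≤ 0 := by
    unfold gg
    have : ∀ i, max (|ξ i| - (1 - ε) * ν₀) 0 = 0 := by
      intro i
      apply max_eq_right
      have hle : |ξ i| ≤ ∑ j, |ξ j| :=
        Finset.single_le_sum (f := fun j => |ξ j|) (fun j _ => abs_nonneg _) (Finset.mem_univ i)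
      have : (1 - ε) * ν₀ = (∑ j, |ξ j|) + (1 - ε) := by
        rw [hν₀, mul_add, mul_one, mul_div_assoc', mul_div_right_comm, div_self h1ε.ne', one_mul]
      nlinarith
    simp only [this]
    have : ∑ i : Fin n, (0:ℝ) ^ 2 = 0 := by simp
    rw [this]
    nlinarith [sq_nonneg (ε * ν₀)]
  have := intermediate_value_Icc' (f := gg ξ ε) hν₀0 ((gg_cont (ε := ε) ξ).continuousOn (s := Set.Icc 0 ν₀))
  have h0 : (0:ℝ) ∈ Set.Icc (gg ξ ε ν₀) (gg ξ ε 0) := ⟨hgν₀, gg_zero ξ⟩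
  obtain ⟨ν, hν, hgν⟩ := this h0
  exact ⟨ν, hν.1, by unfold gg at hgν; linarith⟩

private lemma epsNorm_le_one_iff (hε : ε ∈ Set.Ioo (0:ℝ) 1) :
    epsNorm n ε ξ ≤ 1 ↔ ∑ i, (max (|ξ i| - (1 - ε)) 0) ^ 2 ≤ ε ^ 2 := by
  have key : (∑ i, (max (|ξ i| - (1 - ε)) 0) ^ 2 ≤ ε ^ 2) ↔ gg ξ ε 1 ≤ 0 := by
    unfold gg
    simp only [mul_one]
    constructor <;> intro h <;> linarith
  rw [key]
  set S := {ν : ℝ | 0 ≤ ν ∧ ∑ i, (max (|ξ i| - (1 - ε) * ν) 0) ^ 2 = (ε * ν) ^ 2} with hS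
  have hbdd : BddBelow S := ⟨0, fun ν hν => hν.1⟩
  have hne : S.Nonempty := the_set_nonempty ξ hε
  constructor
  · intro h
    have hIoi : ∀ μ ∈ Set.Ioi (1:ℝ), gg ξ ε μ ≤ 0 := by
      intro μ hμ
      obtain ⟨ν, hνS, hνμ⟩ := exists_lt_of_csInf_lt hne (lt_of_le_of_lt h hμ)
      have hgν : gg ξ ε ν ≤ 0 := by unfold gg; linarith [hνS.2]
      exact gg_mono ξ hε hνS.1 hνμ.le hgν
    have htend : Tendsto (gg ξ ε) (𝓝[>] 1) (𝓝 (gg ξ ε 1)) :=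
      ((gg_cont ξ).tendsto 1).mono_left nhdsWithin_le_nhds
    exact le_of_tendsto htend (eventually_nhdsWithin_of_forall hIoi)
  · intro h
    have := intermediate_value_Icc' (f := gg ξ ε) (zero_le_one) ((gg_cont (ε := ε) ξ).continuousOn (s := Set.Icc 0 1))
    obtain ⟨ν, hν, hgν⟩ := this (⟨h, gg_zero ξ⟩ : (0:ℝ) ∈ Set.Icc (gg ξ ε 1) (gg ξ ε 0))
    have hνS : ν ∈ S := ⟨hν.1, by unfold gg at hgν; linarith⟩
    exact le_trans (csInf_le hbdd hνS) hν.2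

end aux

theorem stmt_6 (n : ℕ) (ε : ℝ) (hε : ε ∈ Set.Ioo (0:ℝ) 1) :
    {ξ : EuclideanSpace ℝ (Fin n) | epsNorm n ε ξ ≤ 1} =
      {ξ : EuclideanSpace ℝ (Fin n) | ∃ x y : EuclideanSpace ℝ (Fin n),
        ξ = x + y ∧ ‖x‖ ≤ ε ∧ ∀ i, |y i| ≤ 1 - ε} := by
  have h1ε : (0:ℝ) < 1 - ε := by linarith [hε.2]
  ext ξ
  simp only [Set.mem_setOf_eq]
  rw [epsNorm_le_one_iff ξ hε]
  have norm_sq : ∀ x : EuclideanSpace ℝ (Fin n), ‖x‖ ^ 2 = ∑ i, |x i| ^ 2 := by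
    intro x
    rw [EuclideanSpace.norm_eq, Real.sq_sqrt (Finset.sum_nonneg fun i _ => by positivity)]
    simp [Real.norm_eq_abs]
  have norm_le : ∀ x : EuclideanSpace ℝ (Fin n), (‖x‖ ≤ ε ↔ ∑ i, |x i| ^ 2 ≤ ε ^ 2) := by
    intro x
    rw [← norm_sq]
    constructor
    · intro h; exact pow_le_pow_left₀ (norm_nonneg _) h 2
    · intro h; exact le_of_pow_le_pow_left₀ two_ne_zero hε.1.le h
  constructor
  · intro h
    refine ⟨(WithLp.toLp 2 (fun i => ξ i - max (min (ξ i) (1 - ε)) (-(1-ε))) : EuclideanSpace ℝ (Fin n)),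
      (WithLp.toLp 2 (fun i => max (min (ξ i) (1 - ε)) (-(1-ε))) : EuclideanSpace ℝ (Fin n)), ?_, ?_, ?_⟩
    · ext i; simp
    · rw [norm_le]
      have key : ∀ t : ℝ, |t - max (min t (1 - ε)) (-(1-ε))| = max (|t| - (1 - ε)) 0 := by
        intro t
        rcases le_total t (1 - ε) with h1 | h1
        · rcases le_total (-(1 - ε)) t with h2 | h2
          · rw [min_eq_left h1, max_eq_left h2, sub_self, abs_zero, max_eq_right]
            have : |t| ≤ 1 - ε := abs_le.mpr ⟨by linarith, h1⟩
            linarith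
          · rw [min_eq_left h1, max_eq_right h2,
              abs_of_nonpos (by linarith : t - -(1 - ε) ≤ 0),
              abs_of_nonpos (by linarith : t ≤ 0),
              max_eq_left (by linarith)]
            ring
        · rw [min_eq_right h1, max_eq_left (by linarith : -(1 - ε) ≤ 1 - ε),
            abs_of_nonneg (by linarith : (0:ℝ) ≤ t - (1 - ε)),
            abs_of_nonneg (by linarith : (0:ℝ) ≤ t),
            max_eq_left (by linarith)]
      have tthis : ∀ i, |ξ i - max (min (ξ i) (1 - ε)) (-(1-ε))| = max (|ξ i| - (1 - ε)) 0 :=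
        fun i => key (ξ i)
      calc ∑ i, |ξ i - max (min (ξ i) (1 - ε)) (-(1-ε))| ^ 2
          = ∑ i, (max (|ξ i| - (1 - ε)) 0) ^ 2 := by
            apply Finset.sum_congr rfl; intro i _; rw [tthis i]
        _ ≤ ε ^ 2 := h
    · intro i
      rw [abs_le]
      constructor
      · exact le_max_right _ _
      · exact max_le (min_le_right _ _) (by linarith)
  · rintro ⟨x, y, rfl, hx, hy⟩
    rw [norm_le] at hx
    calc ∑ i, (max (|(x + y) i| - (1 - ε)) 0) ^ 2
        ≤ ∑ i, |x i| ^ 2 := by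
          apply Finset.sum_le_sum
          intro i _
          apply pow_le_pow_left₀ (le_max_right _ 0)
          apply max_le _ (abs_nonneg _)
          have : |(x + y) i| ≤ |x i| + |y i| := by
            have : (x + y) i = x i + y i := rfl
            rw [this]; exact abs_add_le _ _
          linarith [hy i]
      _ ≤ ε ^ 2 := hx
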